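/- Let R be a partial order on a finite set E, viewed as the correspondence {(a,b) ∈ E × E | a ≤_R b}, let X be a finite set, and let U ⊆ E × X and S ⊆ X × E be correspondences with SR = S. Then: (i) US = R if and only if RUS = R; (ii) for every permutation σ of E, writing Δ_σ = {(σ(x), x) | x ∈ E}, one has Δ_E ⊆ Δ_{σ^{-1}} U S ⊆ R if and only if US = Δ_σ R. -/

import Mathlib

open scoped Classical

/-- Composition of correspondences: `corrComp R S = RS`. -/
def corrComp {X Y Z : Type*} (R : Set (Z × Y)) (S : Set (Y × X)) : Set (Z × X) :=
  {p | ∃ y, (p.1, y) ∈ R ∧ (y, p.2) ∈ S}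

/-- Opposite correspondence. -/
def corrOp {X Y : Type*} (S : Set (Y × X)) : Set (X × Y) := {p | (p.2, p.1) ∈ S}

/-- Identity correspondence. -/
def deltaCorr (X : Type*) : Set (X × X) := {p | p.1 = p.2}

/-- The action of a correspondence `Q ⊆ Y × X` on a function `φ : X → T`,
`(Qφ)(y) = ⋁ {φ(x) | (y,x) ∈ Q}` (empty join being `⊥`). -/
noncomputable def corrApp {T : Type*} [SemilatticeSup T] [OrderBot T]
    {X Y : Type*} [Fintype X] (Q : Set (Y × X)) (φ : X → T) : Y → T :=
  fun y => (Finset.univ.filter fun x => (y, x) ∈ Q).sup φ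

/-- **Statement 13.** Let `R` be a partial order on a finite set `E` (viewed as a
correspondence), and `U ⊆ E × X`, `S ⊆ X × E` with `SR = S`. Then (i) `US = R` iff
`RUS = R`; (ii) for every permutation `σ` of `E`, `Δ_E ⊆ Δ_{σ⁻¹} U S ⊆ R` iff
`US = Δ_σ R`. -/
theorem retraction_conditions (E : Type) [Fintype E] [PartialOrder E]
    (X : Type) [Fintype X] (U : Set (E × X)) (S : Set (X × E))
    (hS : corrComp S {p : E × E | p.1 ≤ p.2} = S) :
    (corrComp U S = {p : E × E | p.1 ≤ p.2} ↔
      corrComp {p : E × E | p.1 ≤ p.2} (corrComp U S) = {p : E × E | p.1 ≤ p.2}) ∧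
    (∀ σ : Equiv.Perm E,
      (deltaCorr E ⊆ corrComp {p : E × E | p.1 = σ⁻¹ p.2} (corrComp U S) ∧
        corrComp {p : E × E | p.1 = σ⁻¹ p.2} (corrComp U S) ⊆ {p : E × E | p.1 ≤ p.2})
        ↔ corrComp U S = corrComp {p : E × E | p.1 = σ p.2} {p : E × E | p.1 ≤ p.2}) := by

  have hup : ∀ a e e', (a, e) ∈ corrComp U S → e ≤ e' → (a, e') ∈ corrComp U S := by
    rintro a e e' ⟨x, hU, hSx⟩ hle
    exact ⟨x, hU, by rw [← hS]; exact ⟨e, hSx, hle⟩⟩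
  constructor
  · constructor
    · intro h
      rw [h]
      ext ⟨a, c⟩
      constructor
      · rintro ⟨b, hab, hbc⟩
        exact le_trans hab hbc
      · intro h'
        exact ⟨a, le_refl a, h'⟩
    · intro h
      have hTR : ∀ a c : E, (a, c) ∈ corrComp U S → a ≤ c := by
        intro a c hac
        have h' : (a, c) ∈ corrComp {p : E × E | p.1 ≤ p.2} (corrComp U S) :=
          ⟨a, le_refl a, hac⟩
        rw [h] at h'
        exact h'
      have hdiag : ∀ a : E, (a, a) ∈ corrComp U S := by
        intro a
        have h' : (a, a) ∈ corrComp {p : E × E | p.1 ≤ p.2} (corrComp U S) := by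
          rw [h]; exact le_refl a
        obtain ⟨b, hab, hba⟩ := h'
        have hba' := hTR b a hba
        have hba2 : b = a := le_antisymm hba' hab
        rwa [hba2] at hba
      ext ⟨a, c⟩
      constructor
      · exact hTR a c
      · intro hac
        exact hup a a c (hdiag a) hac
  · intro σ
    constructor
    · rintro ⟨h1, h2⟩
      have hd : ∀ a : E, (σ a, a) ∈ corrComp U S := by
        intro a
        obtain ⟨b, hb, hbT⟩ := h1 (show (a, a) ∈ deltaCorr E from rfl)
        have hb' : b = σ a := by
          have : (a : E) = σ⁻¹ b := hb
          rw [this]; simp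
        rwa [hb'] at hbT
      ext ⟨a, c⟩
      constructor
      · intro hT
        refine ⟨σ⁻¹ a, (Equiv.apply_symm_apply σ a).symm, ?_⟩
        exact h2 (show ((σ⁻¹ a : E), c) ∈ _ from ⟨a, rfl, hT⟩)
      · rintro ⟨b, hb, hbc⟩
        have hb' : a = σ b := hb
        rw [hb']
        exact hup (σ b) b c (hd b) hbc
    · intro hUS
      constructor
      · rintro ⟨a, c⟩ hac
        have hac' : a = c := hac
        subst hac'
        refine ⟨σ a, (σ.symm_apply_apply a).symm, ?_⟩
        rw [hUS]
        exact ⟨a, rfl, le_refl a⟩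
      · rintro ⟨a, c⟩ ⟨b, hb, hbT⟩
        rw [hUS] at hbT
        obtain ⟨b', hb', hb'c⟩ := hbT
        have h1 : a = σ⁻¹ b := hb
        have h2 : b = σ b' := hb'
        have : a = b' := by rw [h1, h2]; simp
        rw [this]
        exact hb'c
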